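/- Transitivity/composition of support bounds: for any patterns p, r, w with the same gap constraint, sup(p·r·w, D) ≤ sup(p·r, D) ≤ sup(p, D). Consequently, if p → r is not a strong co-occurrence rule (conf(p → r) < mincf), then for every pattern w, p → r·w is also not a strong co-occurrence rule. -/
import Mathlib


open Finset

variable {α : Type*}

/-- `l` is an occurrence of the pattern `p` (with gap constraint `[a,b]`) in the
sequence `s` of length `n`: positions are within the sequence, match the pattern,
are strictly increasing, and consecutive gaps lie in `[a,b]`. -/
def IsOcc (s : ℕ → α) (n : ℕ) {m : ℕ} (p : Fin m → α) (a b : ℕ) (l : Fin m → ℕ) : Prop :=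
  (∀ j, l j < n) ∧ (∀ j, s (l j) = p j) ∧
  ∀ (i : ℕ) (h : i + 1 < m),
    l ⟨i, Nat.lt_of_succ_lt h⟩ < l ⟨i + 1, h⟩ ∧
    a ≤ l ⟨i + 1, h⟩ - l ⟨i, Nat.lt_of_succ_lt h⟩ - 1 ∧
    l ⟨i + 1, h⟩ - l ⟨i, Nat.lt_of_succ_lt h⟩ - 1 ≤ b

/-- Two occurrences are nonoverlapping iff they differ at every coordinate. -/
def NonOverlap {m : ℕ} (l l' : Fin m → ℕ) : Prop := ∀ j, l j ≠ l' j

/-- `F` is a pairwise nonoverlapping family of occurrences of `p` in `s`. -/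
def NOFamily (s : ℕ → α) (n : ℕ) {m : ℕ} (p : Fin m → α) (a b : ℕ)
    (F : Finset (Fin m → ℕ)) : Prop :=
  (∀ l ∈ F, IsOcc s n p a b l) ∧
  ∀ l ∈ F, ∀ l' ∈ F, l ≠ l' → NonOverlap l l'

/-- The nonoverlapping support of `p` in `s`: the maximum cardinality of a
pairwise nonoverlapping family of occurrences. -/
noncomputable def supNO (s : ℕ → α) (n : ℕ) {m : ℕ} (p : Fin m → α) (a b : ℕ) : ℕ :=
  sSup {k | ∃ F : Finset (Fin m → ℕ), NOFamily s n p a b F ∧ F.card = k}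

/-- Database support: sum of nonoverlapping supports over the sequences
(`D` is a list of pairs (sequence, length)). -/
noncomputable def supNOD (D : List ((ℕ → α) × ℕ)) {m : ℕ} (p : Fin m → α) (a b : ℕ) : ℕ :=
  (D.map fun sn => supNO sn.1 sn.2 p a b).sum

/-- sup(p·r·w, D) ≤ sup(p·r, D) ≤ sup(p, D); consequently if
p → r is not strong then neither is p → r·w. -/

lemma supNO_append_le (s : ℕ → α) (n : ℕ) {m k : ℕ} (hm : 0 < m)
    (p : Fin m → α) (q : Fin k → α) (a b : ℕ) :
    supNO s n (Fin.append p q) a b ≤ supNO s n p a b := by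
  have hbdd : BddAbove {c | ∃ F : Finset (Fin m → ℕ), NOFamily s n p a b F ∧ F.card = c} := by
    refine ⟨n ^ m, ?_⟩
    rintro c ⟨F, hF, rfl⟩
    calc F.card ≤ (Fintype.piFinset fun _ : Fin m => Finset.range n).card := by
          apply Finset.card_le_card
          intro l hl
          rw [Fintype.mem_piFinset]
          intro i
          rw [Finset.mem_range]
          exact (hF.1 l hl).1 i
      _ = n ^ m := by simp
  have hne : {c | ∃ F : Finset (Fin (m + k) → ℕ),
      NOFamily s n (Fin.append p q) a b F ∧ F.card = c}.Nonempty :=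
    ⟨0, ∅, ⟨by simp, by simp⟩, by simp⟩
  refine csSup_le hne ?_
  rintro c ⟨F, hF, rfl⟩
  set g : (Fin (m + k) → ℕ) → (Fin m → ℕ) := fun l i => l (Fin.castAdd k i) with hg
  have hinj : Set.InjOn g F := by
    intro l1 h1 l2 h2 heq
    by_contra hne'
    exact hF.2 l1 h1 l2 h2 hne' (Fin.castAdd k ⟨0, hm⟩) (congrFun heq ⟨0, hm⟩)
  have hmem : ∀ l1 ∈ F.image g, ∃ l ∈ F, g l = l1 := by
    intro l1 h1
    simpa using Finset.mem_image.1 h1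
  have hfam : NOFamily s n p a b (F.image g) := by
    constructor
    · intro l1 h1
      obtain ⟨l, hl, rfl⟩ := hmem l1 h1
      obtain ⟨ho1, ho2, ho3⟩ := hF.1 l hl
      refine ⟨fun i => ho1 _, fun i => ?_, fun i h => ?_⟩
      · have := ho2 (Fin.castAdd k i)
        rwa [Fin.append_left] at this
      · have h' : i + 1 < m + k := Nat.lt_of_lt_of_le h (Nat.le_add_right m k)
        have h3 := ho3 i h'
        have e1 : g l ⟨i, Nat.lt_of_succ_lt h⟩ = l ⟨i, Nat.lt_of_succ_lt h'⟩ := rfl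
        have e2 : g l ⟨i + 1, h⟩ = l ⟨i + 1, h'⟩ := rfl
        rw [e1, e2]
        exact h3
    · intro l1 h1 l2 h2 hne' i
      obtain ⟨la, hla, rfl⟩ := hmem l1 h1
      obtain ⟨lb, hlb, rfl⟩ := hmem l2 h2
      have : la ≠ lb := fun h => hne' (by rw [h])
      exact hF.2 la hla lb hlb this (Fin.castAdd k i)
  have : (F.image g).card = F.card := Finset.card_image_of_injOn hinj
  refine le_csSup hbdd ?_
  exact ⟨F.image g, hfam, this⟩

lemma supNOD_append_le (D : List ((ℕ → α) × ℕ)) {m k : ℕ} (hm : 0 < m)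
    (p : Fin m → α) (q : Fin k → α) (a b : ℕ) :
    supNOD D (Fin.append p q) a b ≤ supNOD D p a b :=
  List.sum_le_sum fun sn _ => supNO_append_le sn.1 sn.2 hm p q a b

theorem stmt8 {α : Type*} (D : List ((ℕ → α) × ℕ)) (a b : ℕ)
    {m k j : ℕ} (hm : 0 < m) (hk : 0 < k)
    (p : Fin m → α) (r : Fin k → α) (w : Fin j → α)
    (mincf : ℝ) (hp : 0 < supNOD D p a b) :
    supNOD D (Fin.append (Fin.append p r) w) a b ≤ supNOD D (Fin.append p r) a b ∧
    supNOD D (Fin.append p r) a b ≤ supNOD D p a b ∧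
    ((supNOD D (Fin.append p r) a b : ℝ) / (supNOD D p a b : ℝ) < mincf →
      (supNOD D (Fin.append (Fin.append p r) w) a b : ℝ) / (supNOD D p a b : ℝ) < mincf) := by
  have h1 : supNOD D (Fin.append (Fin.append p r) w) a b ≤ supNOD D (Fin.append p r) a b :=
    supNOD_append_le D (Nat.lt_of_lt_of_le hm (Nat.le_add_right m k)) (Fin.append p r) w a b
  have h2 : supNOD D (Fin.append p r) a b ≤ supNOD D p a b :=
    supNOD_append_le D hm p r a b
  refine ⟨h1, h2, fun hlt => ?_⟩
  have hp' : (0 : ℝ) < (supNOD D p a b : ℝ) := by exact_mod_cast hp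
  refine lt_of_le_of_lt ?_ hlt
  gcongr
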